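/- Let R be an ergodic countable Borel equivalence relation on a standard Borel space X with an atomless quasi-invariant Borel probability measure μ, and let Φ be a finite graphing of R. Then the metric-measure space (X, d_Φ, μ) is concentrated if and only if R is strongly ergodic. (An ergodic singular space of finite type is concentrated if and only if it is strongly ergodic.) -/

import Mathlib

open MeasureTheory Filter Set
open scoped ENNReal

/-- A partial isomorphism of a standard Borel space `X`: a Borel bijection between
two Borel subsets `dom` and `ran` of `X`, with Borel inverse. -/
structure PartialIso (X : Type*) [MeasurableSpace X] where
  dom : Set X
  ran : Set X
  toFun : X → X
  invFun : X → X
  measurableSet_dom : MeasurableSet dom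
  measurableSet_ran : MeasurableSet ran
  measurable_toFun : Measurable toFun
  measurable_invFun : Measurable invFun
  mapsTo : Set.MapsTo toFun dom ran
  mapsTo_inv : Set.MapsTo invFun ran dom
  left_inv : ∀ x ∈ dom, invFun (toFun x) = x
  right_inv : ∀ y ∈ ran, toFun (invFun y) = y

namespace PartialIso

variable {X : Type*} [MeasurableSpace X]

/-- The identity as a partial isomorphism. -/
def refl (X : Type*) [MeasurableSpace X] : PartialIso X :=
  ⟨Set.univ, Set.univ, id, id, MeasurableSet.univ, MeasurableSet.univ,
   measurable_id, measurable_id, Set.mapsTo_univ _ _, Set.mapsTo_univ _ _,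
   fun _ _ => rfl, fun _ _ => rfl⟩

/-- The inverse of a partial isomorphism. -/
def symm (f : PartialIso X) : PartialIso X :=
  ⟨f.ran, f.dom, f.invFun, f.toFun, f.measurableSet_ran, f.measurableSet_dom,
   f.measurable_invFun, f.measurable_toFun, f.mapsTo_inv, f.mapsTo,
   f.right_inv, f.left_inv⟩

/-- Composition (first `f`, then `g`) of partial isomorphisms, on its natural domain. -/
def trans (f g : PartialIso X) : PartialIso X where
  dom := f.dom ∩ f.toFun ⁻¹' g.dom
  ran := g.ran ∩ g.invFun ⁻¹' f.ran
  toFun := g.toFun ∘ f.toFun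
  invFun := f.invFun ∘ g.invFun
  measurableSet_dom := f.measurableSet_dom.inter (f.measurable_toFun g.measurableSet_dom)
  measurableSet_ran := g.measurableSet_ran.inter (g.measurable_invFun f.measurableSet_ran)
  measurable_toFun := g.measurable_toFun.comp f.measurable_toFun
  measurable_invFun := f.measurable_invFun.comp g.measurable_invFun
  mapsTo := by
    rintro x ⟨hx1, hx2⟩
    refine ⟨g.mapsTo hx2, ?_⟩
    show g.invFun (g.toFun (f.toFun x)) ∈ f.ran
    rw [g.left_inv _ hx2]
    exact f.mapsTo hx1
  mapsTo_inv := by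
    rintro y ⟨hy1, hy2⟩
    refine ⟨f.mapsTo_inv hy2, ?_⟩
    show f.toFun (f.invFun (g.invFun y)) ∈ g.dom
    rw [f.right_inv _ hy2]
    exact g.mapsTo_inv hy1
  left_inv := by
    rintro x ⟨hx1, hx2⟩
    show f.invFun (g.invFun (g.toFun (f.toFun x))) = x
    rw [g.left_inv _ hx2, f.left_inv _ hx1]
  right_inv := by
    rintro y ⟨hy1, hy2⟩
    show g.toFun (f.toFun (f.invFun (g.invFun y))) = y
    rw [f.right_inv _ hy2, g.right_inv _ hy1]

/-- A partial isomorphism is nonsingular for `μ` (is a partial isomorphism of `(X, μ)`)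
if it maps null sets inside its domain exactly to null sets. -/
def Nonsingular (μ : Measure X) (f : PartialIso X) : Prop :=
  ∀ A ⊆ f.dom, MeasurableSet A → (μ A = 0 ↔ μ (f.toFun '' A) = 0)

/-- The graph of the partial isomorphism `f` is contained in the relation `R`. -/
def IsInnerOf (f : PartialIso X) (R : Set (X × X)) : Prop :=
  ∀ x ∈ f.dom, (x, f.toFun x) ∈ R

end PartialIso

variable {X : Type*} [MeasurableSpace X]

/-- `IsWord Φ m k` : `m` is a `Φ`-word of length `k`, i.e. a composition of `k` elements
of `Φ` and their inverses (on its natural domain). -/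
def IsWord (Φ : Set (PartialIso X)) (m : PartialIso X) (k : ℕ) : Prop :=
  ∃ l : List (PartialIso X), l.length = k ∧
    (∀ φ ∈ l, φ ∈ Φ ∨ ∃ ψ ∈ Φ, φ = ψ.symm) ∧
    m = l.foldl PartialIso.trans (PartialIso.refl X)

/-- `wordDistLE Φ μ A B r` : the essential distance `d_Φ(A, B)` is at most `r`, i.e. the
set of points of `A` sent into `B` by some `Φ`-word of length at most `r` has positive
measure. -/
def wordDistLE (Φ : Set (PartialIso X)) (μ : Measure X) (A B : Set X) (r : ℕ) : Prop :=
  0 < μ {x ∈ A | ∃ m k, IsWord Φ m k ∧ k ≤ r ∧ x ∈ m.dom ∧ m.toFun x ∈ B}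

/-- The metric-measure space `(X, d_Φ, μ)` is concentrated. -/
def Concentrated (Φ : Set (PartialIso X)) (μ : Measure X) : Prop :=
  ∀ δ : ℝ≥0∞, 0 < δ → ∃ r : ℕ, ∀ A B : Set X, MeasurableSet A → MeasurableSet B →
    δ ≤ μ A → δ ≤ μ B → wordDistLE Φ μ A B r

/-- The metric `d_Φ` is ergodic relative to `μ` : any two sets of positive measure are at
finite essential distance. -/
def MetricErgodic (Φ : Set (PartialIso X)) (μ : Measure X) : Prop :=
  ∀ A B : Set X, MeasurableSet A → MeasurableSet B → 0 < μ A → 0 < μ B →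
    ∃ r : ℕ, wordDistLE Φ μ A B r

/-- A sequence of Borel sets is asymptotically invariant for the family `Φ`. -/
def AsympInvariant (Φ : Set (PartialIso X)) (μ : Measure X) (A : ℕ → Set X) : Prop :=
  ∀ m k, IsWord Φ m k →
    Tendsto (fun n => μ (m.toFun '' (A n ∩ m.dom) \ A n)) atTop (nhds 0)

/-- A sequence of Borel sets is nontrivial: measures uniformly bounded away from `0` and `1`. -/
def NontrivialSeq (μ : Measure X) (A : ℕ → Set X) : Prop :=
  ∃ δ : ℝ≥0∞, 0 < δ ∧ ∀ n, δ ≤ μ (A n) ∧ μ (A n) ≤ 1 - δ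

/-- A countable Borel equivalence relation on `X`. -/
def IsCountableBorelER (R : Set (X × X)) : Prop :=
  MeasurableSet R ∧ Equivalence (fun x y => (x, y) ∈ R) ∧ ∀ x, {y | (x, y) ∈ R}.Countable

/-- `μ` is quasi-invariant for `R` : partial isomorphisms of `R` map null sets to null sets. -/
def QuasiInvariant (μ : Measure X) (R : Set (X × X)) : Prop :=
  ∀ f : PartialIso X, f.IsInnerOf R → ∀ N ⊆ f.dom, MeasurableSet N → μ N = 0 →
    μ (f.toFun '' N) = 0

/-- `μ` is invariant for `R` : partial isomorphisms of `R` preserve the measure. -/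
def InvariantMeasure (μ : Measure X) (R : Set (X × X)) : Prop :=
  ∀ f : PartialIso X, f.IsInnerOf R → ∀ A ⊆ f.dom, MeasurableSet A →
    μ (f.toFun '' A) = μ A

/-- `R` is ergodic for `μ` : every Borel saturated set is null or conull. -/
def ErgodicRel (μ : Measure X) (R : Set (X × X)) : Prop :=
  ∀ A : Set X, MeasurableSet A → (∀ x ∈ A, ∀ y, (x, y) ∈ R → y ∈ A) →
    μ A = 0 ∨ μ Aᶜ = 0

/-- `Φ` is a graphing of `R` : a family of partial isomorphisms of `R` whose words connect
almost every pair of equivalent points. -/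
def IsGraphing (Φ : Set (PartialIso X)) (μ : Measure X) (R : Set (X × X)) : Prop :=
  (∀ φ ∈ Φ, φ.IsInnerOf R) ∧
  ∀ᵐ x ∂μ, ∀ y, (x, y) ∈ R → ∃ m k, IsWord Φ m k ∧ x ∈ m.dom ∧ m.toFun x = y

/-- A sequence of Borel sets is asymptotically invariant for the relation `R`. -/
def AsympInvariantRel (μ : Measure X) (R : Set (X × X)) (A : ℕ → Set X) : Prop :=
  ∀ f : PartialIso X, f.IsInnerOf R →
    Tendsto (fun n => μ (f.toFun '' (A n ∩ f.dom) \ A n)) atTop (nhds 0)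

/-- `R` is strongly ergodic : every asymptotically invariant sequence is trivial. -/
def StronglyErgodic (μ : Measure X) (R : Set (X × X)) : Prop :=
  ¬ ∃ A : ℕ → Set X, (∀ n, MeasurableSet (A n)) ∧ AsympInvariantRel μ R A ∧
    NontrivialSeq μ A

/-- The boundary `∂_Φ A` of a set `A` with respect to the family `Φ`. -/
def bdry (Φ : Set (PartialIso X)) (A : Set X) : Set X :=
  (⋃ φ ∈ Φ, φ.toFun '' (A ∩ φ.dom) ∪ φ.invFun '' (A ∩ φ.ran)) \ A

/-- A vanishing Følner sequence for the family `Φ`. -/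
def VanishingFolner (Φ : Set (PartialIso X)) (μ : Measure X) (A : ℕ → Set X) : Prop :=
  (∀ n, MeasurableSet (A n)) ∧ (∀ n, 0 < μ (A n)) ∧
  Tendsto (fun n => μ (A n)) atTop (nhds 0) ∧
  Tendsto (fun n => μ (bdry Φ (A n)) / μ (A n)) atTop (nhds 0)

/-- The equivalence relation generated by the family `Φ` : `(x, y) ∈ RGen Φ` iff `y = m x`
for some `Φ`-word `m`. -/
def RGen (Φ : Set (PartialIso X)) : Set (X × X) :=
  {p | ∃ m k, IsWord Φ m k ∧ p.1 ∈ m.dom ∧ m.toFun p.1 = p.2}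

section Auxiliary

namespace PartialIso

variable {X : Type*} [MeasurableSpace X]

theorem ext' {f g : PartialIso X} (h1 : f.dom = g.dom) (h2 : f.ran = g.ran)
    (h3 : f.toFun = g.toFun) (h4 : f.invFun = g.invFun) : f = g := by
  cases f; cases g; simp_all

@[simp] theorem refl_trans (f : PartialIso X) : (refl X).trans f = f := by
  refine ext' ?_ ?_ rfl rfl
  · show Set.univ ∩ id ⁻¹' f.dom = f.dom
    simp
  · show f.ran ∩ f.invFun ⁻¹' Set.univ = f.ran
    simp

@[simp] theorem trans_refl (f : PartialIso X) : f.trans (refl X) = f := by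
  refine ext' ?_ ?_ rfl rfl
  · show f.dom ∩ f.toFun ⁻¹' Set.univ = f.dom
    simp
  · show Set.univ ∩ id ⁻¹' f.ran = f.ran
    simp

theorem trans_assoc (f g h : PartialIso X) :
    (f.trans g).trans h = f.trans (g.trans h) := by
  refine ext' ?_ ?_ rfl rfl
  · show (f.dom ∩ f.toFun ⁻¹' g.dom) ∩ (g.toFun ∘ f.toFun) ⁻¹' h.dom
        = f.dom ∩ f.toFun ⁻¹' (g.dom ∩ g.toFun ⁻¹' h.dom)
    rw [Set.preimage_comp, Set.preimage_inter, Set.inter_assoc]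
  · show h.ran ∩ h.invFun ⁻¹' (g.ran ∩ g.invFun ⁻¹' f.ran)
        = (h.ran ∩ h.invFun ⁻¹' g.ran) ∩ (g.invFun ∘ h.invFun) ⁻¹' f.ran
    rw [Set.preimage_comp, Set.preimage_inter, Set.inter_assoc]

@[simp] theorem symm_symm (f : PartialIso X) : f.symm.symm = f := rfl

theorem symm_trans' (f g : PartialIso X) : (f.trans g).symm = g.symm.trans f.symm := rfl

@[simp] theorem symm_refl : (refl X).symm = refl X := rfl

theorem foldl_trans (l : List (PartialIso X)) (e : PartialIso X) :
    l.foldl trans e = e.trans (l.foldl trans (refl X)) := by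
  induction l generalizing e with
  | nil => simp
  | cons a l ih =>
    simp only [List.foldl_cons]
    rw [ih (e.trans a), ih ((refl X).trans a), refl_trans, trans_assoc]

theorem foldl_symm (l : List (PartialIso X)) :
    (l.foldl trans (refl X)).symm = (l.reverse.map symm).foldl trans (refl X) := by
  induction l with
  | nil => rfl
  | cons a l ih =>
    rw [List.foldl_cons, refl_trans, foldl_trans, symm_trans', ih,
      List.reverse_cons, List.map_append, List.foldl_append]
    rfl

theorem image_eq (f : PartialIso X) {S : Set X} (hS : S ⊆ f.dom) :
    f.toFun '' S = f.invFun ⁻¹' S ∩ f.ran := by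
  ext y
  constructor
  · rintro ⟨x, hx, rfl⟩
    exact ⟨by rw [Set.mem_preimage, f.left_inv x (hS hx)]; exact hx, f.mapsTo (hS hx)⟩
  · rintro ⟨h1, h2⟩
    exact ⟨f.invFun y, h1, f.right_inv y h2⟩

theorem measurableSet_image (f : PartialIso X) {S : Set X} (hSm : MeasurableSet S)
    (hS : S ⊆ f.dom) : MeasurableSet (f.toFun '' S) := by
  rw [image_eq f hS]
  exact (f.measurable_invFun hSm).inter f.measurableSet_ran

theorem invFun_image_image (f : PartialIso X) {S : Set X} (hS : S ⊆ f.dom) :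
    f.invFun '' (f.toFun '' S) = S := by
  rw [Set.image_image]
  ext x
  constructor
  · rintro ⟨y, hy, rfl⟩
    show f.invFun (f.toFun y) ∈ S
    rwa [f.left_inv y (hS hy)]
  · intro hx
    exact ⟨x, hx, f.left_inv x (hS hx)⟩

theorem image_subset_ran (f : PartialIso X) {S : Set X} (hS : S ⊆ f.dom) :
    f.toFun '' S ⊆ f.ran :=
  ((f.mapsTo.mono_left hS).image_subset)

end PartialIso

end Auxiliary

section Words

open PartialIso

variable {X : Type*} [MeasurableSpace X] {Φ : Set (PartialIso X)}

theorem isWord_refl (Φ : Set (PartialIso X)) : IsWord Φ (PartialIso.refl X) 0 :=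
  ⟨[], rfl, by simp, rfl⟩

theorem IsWord.trans' {m m' : PartialIso X} {k k' : ℕ} (h : IsWord Φ m k)
    (h' : IsWord Φ m' k') : IsWord Φ (m.trans m') (k + k') := by
  obtain ⟨l, hl, hmem, rfl⟩ := h
  obtain ⟨l', hl', hmem', rfl⟩ := h'
  refine ⟨l ++ l', by simp [hl, hl'], ?_, ?_⟩
  · intro φ hφ
    rcases List.mem_append.1 hφ with h | h
    exacts [hmem φ h, hmem' φ h]
  · conv_rhs => rw [List.foldl_append, foldl_trans]

theorem isWord_of_mem {φ : PartialIso X} (h : φ ∈ Φ) : IsWord Φ φ 1 :=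
  ⟨[φ], rfl, by simp [h], by simp⟩

theorem isWord_symm_of_mem {φ : PartialIso X} (h : φ ∈ Φ) : IsWord Φ φ.symm 1 :=
  ⟨[φ.symm], rfl, by simp; exact Or.inr ⟨φ, h, rfl⟩, by simp⟩

theorem IsWord.symm' {m : PartialIso X} {k : ℕ} (h : IsWord Φ m k) :
    IsWord Φ m.symm k := by
  obtain ⟨l, hl, hmem, rfl⟩ := h
  refine ⟨l.reverse.map PartialIso.symm, by simp [hl], ?_, (foldl_symm l)⟩
  intro φ hφ
  rw [List.mem_map] at hφ
  obtain ⟨ψ, hψ, rfl⟩ := hφ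
  rw [List.mem_reverse] at hψ
  rcases hmem ψ hψ with h | ⟨χ, hχ, rfl⟩
  · exact Or.inr ⟨ψ, h, rfl⟩
  · exact Or.inl (by rw [symm_symm]; exact hχ)

theorem inner_refl {R : Set (X × X)} (hR : Equivalence (fun x y => (x, y) ∈ R)) :
    (PartialIso.refl X).IsInnerOf R := fun x _ => hR.refl x

theorem PartialIso.IsInnerOf.symm'' {R : Set (X × X)} {f : PartialIso X}
    (hR : Equivalence (fun x y => (x, y) ∈ R)) (hf : f.IsInnerOf R) :
    f.symm.IsInnerOf R := by
  intro y hy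
  have : (f.invFun y, f.toFun (f.invFun y)) ∈ R := hf _ (f.mapsTo_inv hy)
  rw [f.right_inv y hy] at this
  exact hR.symm this

theorem PartialIso.IsInnerOf.trans'' {R : Set (X × X)} {f g : PartialIso X}
    (hR : Equivalence (fun x y => (x, y) ∈ R)) (hf : f.IsInnerOf R) (hg : g.IsInnerOf R) :
    (f.trans g).IsInnerOf R := by
  rintro x ⟨hx1, hx2⟩
  exact hR.trans (hf x hx1) (hg _ hx2)

theorem IsWord.inner {R : Set (X × X)} (hR : Equivalence (fun x y => (x, y) ∈ R))
    (hΦ : ∀ φ ∈ Φ, φ.IsInnerOf R) {m : PartialIso X} {k : ℕ} (h : IsWord Φ m k) :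
    m.IsInnerOf R := by
  obtain ⟨l, hl, hmem, rfl⟩ := h
  clear hl
  induction l with
  | nil => exact inner_refl hR
  | cons a l ih =>
    rw [List.foldl_cons, refl_trans, foldl_trans]
    have ha : a.IsInnerOf R := by
      rcases hmem a (List.mem_cons_self) with h | ⟨ψ, hψ, rfl⟩
      · exact hΦ a h
      · exact (hΦ ψ hψ).symm'' hR
    exact ha.trans'' hR (ih fun φ hφ => hmem φ (List.mem_cons_of_mem a hφ))

theorem finite_lists {α : Type*} {T : Set α} (hT : T.Finite) :
    ∀ r : ℕ, {l : List α | l.length ≤ r ∧ ∀ x ∈ l, x ∈ T}.Finite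
  | 0 => by
    refine (Set.finite_singleton ([] : List α)).subset ?_
    rintro l ⟨hl, -⟩
    simp [List.length_eq_zero_iff.1 (Nat.le_zero.1 hl)]
  | (r + 1) => by
    refine (((hT.prod (finite_lists hT r)).image
      (fun p : α × List α => p.1 :: p.2)).insert []).subset ?_
    rintro l ⟨hl, hmem⟩
    rcases l with - | ⟨a, l⟩
    · exact Set.mem_insert _ _
    · refine Set.mem_insert_of_mem _ ⟨⟨a, l⟩, ⟨hmem a (List.mem_cons_self), ?_, ?_⟩, rfl⟩
      · simpa using Nat.succ_le_succ_iff.1 hl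
      · exact fun x hx => hmem x (List.mem_cons_of_mem a hx)

theorem finite_words (hΦ : Φ.Finite) (r : ℕ) :
    {m : PartialIso X | ∃ k ≤ r, IsWord Φ m k}.Finite := by
  have hT : (Φ ∪ PartialIso.symm '' Φ).Finite := hΦ.union (hΦ.image _)
  refine ((finite_lists hT r).image
    (fun l : List (PartialIso X) => l.foldl PartialIso.trans (PartialIso.refl X))).subset ?_
  rintro m ⟨k, hk, l, hl, hmem, rfl⟩
  refine ⟨l, ⟨hl ▸ hk, fun φ hφ => ?_⟩, rfl⟩
  rcases hmem φ hφ with h | ⟨ψ, hψ, rfl⟩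
  · exact Or.inl h
  · exact Or.inr ⟨ψ, hψ, rfl⟩

theorem countable_words (hΦ : Φ.Finite) :
    {m : PartialIso X | ∃ k, IsWord Φ m k}.Countable := by
  have : {m : PartialIso X | ∃ k, IsWord Φ m k}
      ⊆ ⋃ r : ℕ, {m : PartialIso X | ∃ k ≤ r, IsWord Φ m k} := by
    rintro m ⟨k, hm⟩
    exact Set.mem_iUnion.2 ⟨k, k, le_rfl, hm⟩
  exact (Set.countable_iUnion fun r => (finite_words hΦ r).countable).mono this

theorem distSet_eq (Φ : Set (PartialIso X)) (r : ℕ) (A B : Set X) :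
    {x ∈ A | ∃ m k, IsWord Φ m k ∧ k ≤ r ∧ x ∈ m.dom ∧ m.toFun x ∈ B}
      = ⋃ m ∈ {m : PartialIso X | ∃ k ≤ r, IsWord Φ m k}, A ∩ m.dom ∩ m.toFun ⁻¹' B := by
  ext x
  simp only [Set.mem_setOf_eq, Set.mem_iUnion, Set.mem_inter_iff, Set.mem_preimage]
  constructor
  · rintro ⟨hA, m, k, hw, hk, hd, hB⟩
    exact ⟨m, ⟨k, hk, hw⟩, ⟨hA, hd⟩, hB⟩
  · rintro ⟨m, ⟨k, hk, hw⟩, ⟨hA, hd⟩, hB⟩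
    exact ⟨hA, m, k, hw, hk, hd, hB⟩

theorem distSet_measurable (hΦ : Φ.Finite) (r : ℕ) {A B : Set X}
    (hA : MeasurableSet A) (hB : MeasurableSet B) :
    MeasurableSet {x ∈ A | ∃ m k, IsWord Φ m k ∧ k ≤ r ∧ x ∈ m.dom ∧ m.toFun x ∈ B} := by
  rw [distSet_eq]
  exact (finite_words hΦ r).measurableSet_biUnion fun m _ =>
    (hA.inter m.measurableSet_dom).inter (m.measurable_toFun hB)

end Words

section MeasureLemmas

variable {X : Type*} [MeasurableSpace X]

theorem tendsto_zero_of_le {f g : ℕ → ℝ≥0∞} (hle : ∀ n, f n ≤ g n)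
    (hg : Tendsto g atTop (nhds 0)) : Tendsto f atTop (nhds 0) := by
  rw [ENNReal.tendsto_nhds_zero] at hg ⊢
  intro ε hε
  filter_upwards [hg ε hε] with n hn using (hle n).trans hn

theorem absCont_eps_delta {μ ν : Measure X} [IsFiniteMeasure μ] [IsFiniteMeasure ν]
    (h : ν ≪ μ) {ε : ℝ≥0∞} (hε : 0 < ε) :
    ∃ δ : ℝ≥0∞, 0 < δ ∧ ∀ s, MeasurableSet s → μ s ≤ δ → ν s ≤ ε := by
  by_contra hc
  push_neg at hc
  choose s hsm hsμ hsν using fun n : ℕ =>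
    hc ((1 / 2) ^ n) (ENNReal.pow_pos (by norm_num) n)
  have hsum : ∑' n, μ (s n) ≠ ∞ := by
    refine ne_top_of_le_ne_top (b := ∑' n : ℕ, ((1 : ℝ≥0∞) / 2) ^ n) ?_
      (ENNReal.tsum_le_tsum fun n => hsμ n)
    simp [ENNReal.tsum_geometric]
  have h0 : μ (Filter.limsup s atTop) = 0 := measure_limsup_atTop_eq_zero hsum
  have h1 : ν (Filter.limsup s atTop) = 0 := h h0
  have h2 : ε ≤ ν (Filter.limsup s atTop) := by
    rw [limsup_eq_iInf_iSup_of_nat]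
    simp only [iInf_eq_iInter, iSup_eq_iUnion]
    have hmeas : ∀ n : ℕ, MeasurableSet (⋃ i, ⋃ _ : i ≥ n, s i) := fun n =>
      MeasurableSet.biUnion (Set.to_countable _) fun i _ => hsm i
    have hd : Directed (· ⊇ ·) (fun n : ℕ => ⋃ i, ⋃ _ : i ≥ n, s i) := by
      refine directed_of_isDirected_le ?_
      intro a b hab
      exact Set.biUnion_subset_biUnion_left fun i hi => le_trans hab hi
    rw [Antitone.measure_iInter (fun a b hab => Set.biUnion_subset_biUnion_left fun i hi => le_trans hab hi)
      (fun n => (hmeas n).nullMeasurableSet) ⟨0, measure_ne_top ν _⟩]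
    refine le_iInf fun n => le_trans (hsν n).le (measure_mono ?_)
    exact Set.subset_biUnion_of_mem (le_refl n)
  rw [h1] at h2
  exact absurd h2 (not_le.2 hε)

theorem qi_image_small {μ : Measure X} [IsProbabilityMeasure μ] {R : Set (X × X)}
    (hqi : QuasiInvariant μ R) (f : PartialIso X) (hf : f.IsInnerOf R) {ε : ℝ≥0∞}
    (hε : 0 < ε) :
    ∃ δ : ℝ≥0∞, 0 < δ ∧ ∀ S, MeasurableSet S → S ⊆ f.dom → μ S ≤ δ →
      μ (f.toFun '' S) ≤ ε := by
  set ν : Measure X := Measure.map f.invFun (μ.restrict f.ran) with hν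
  have hν_eq : ∀ S, MeasurableSet S → ν S = μ (f.toFun '' (S ∩ f.dom)) := by
    intro S hS
    rw [hν, Measure.map_apply f.measurable_invFun hS,
      Measure.restrict_apply (f.measurable_invFun hS),
      PartialIso.image_eq f Set.inter_subset_right]
    congr 1
    ext y
    simp only [Set.mem_inter_iff, Set.mem_preimage]
    exact ⟨fun ⟨h1, h2⟩ => ⟨⟨h1, f.mapsTo_inv h2⟩, h2⟩, fun ⟨⟨h1, _⟩, h2⟩ => ⟨h1, h2⟩⟩
  have : IsFiniteMeasure ν := by
    constructor
    rw [hν, Measure.map_apply f.measurable_invFun MeasurableSet.univ]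
    exact lt_of_le_of_lt (Measure.restrict_apply_le _ _) (measure_lt_top μ _)
  have hac : ν ≪ μ := by
    refine Measure.AbsolutelyContinuous.mk fun S hS hS0 => ?_
    rw [hν_eq S hS]
    exact hqi f hf (S ∩ f.dom) Set.inter_subset_right (hS.inter f.measurableSet_dom)
      (le_antisymm (le_trans (measure_mono Set.inter_subset_left) hS0.le) zero_le)
  obtain ⟨δ, hδ, hδ'⟩ := absCont_eps_delta hac hε
  refine ⟨δ, hδ, fun S hSm hSd hμ => ?_⟩
  have := hδ' S hSm hμ
  rwa [hν_eq S hSm, Set.inter_eq_self_of_subset_left hSd] at this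

theorem qi_image_tendsto {μ : Measure X} [IsProbabilityMeasure μ] {R : Set (X × X)}
    (hqi : QuasiInvariant μ R) (f : PartialIso X) (hf : f.IsInnerOf R) {S : ℕ → Set X}
    (hm : ∀ n, MeasurableSet (S n)) (hd : ∀ n, S n ⊆ f.dom)
    (h : Tendsto (fun n => μ (S n)) atTop (nhds 0)) :
    Tendsto (fun n => μ (f.toFun '' S n)) atTop (nhds 0) := by
  rw [ENNReal.tendsto_nhds_zero]
  intro ε hε
  obtain ⟨δ, hδ, hδ'⟩ := qi_image_small hqi f hf hε
  filter_upwards [ENNReal.tendsto_nhds_zero.1 h δ hδ] with n hn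
  exact hδ' _ (hm n) (hd n) hn

end MeasureLemmas

/-- For an ergodic countable Borel equivalence relation of finite type with
quasi-invariant atomless probability measure, concentration of `(X, d_Φ, μ)` for a finite
graphing `Φ` is equivalent to strong ergodicity of `R`. -/
theorem stmt4 {X : Type*} [MeasurableSpace X] [StandardBorelSpace X]
    (μ : Measure X) [IsProbabilityMeasure μ] [NullSingletonClass μ]
    (R : Set (X × X)) (hR : IsCountableBorelER R)
    (hqi : QuasiInvariant μ R) (herg : ErgodicRel μ R)
    (Φ : Set (PartialIso X)) (hΦfin : Φ.Finite) (hΦ : IsGraphing Φ μ R) :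
    Concentrated Φ μ ↔ StronglyErgodic μ R := by
  have hRequiv : Equivalence (fun x y => (x, y) ∈ R) := hR.2.1
  constructor
  · -- Concentrated → StronglyErgodic
    intro hconc
    rintro ⟨A, hAm, hai, δ, hδ, hbound⟩
    have hδ1 : δ ≤ 1 := le_trans (hbound 0).1 prob_le_one
    have hδtop : δ ≠ ∞ := (lt_of_le_of_lt hδ1 (by norm_num)).ne
    have hδ2 : (0 : ℝ≥0∞) < δ / 2 := ENNReal.div_pos hδ.ne' (by norm_num)
    obtain ⟨r, hr⟩ := hconc (δ / 2) hδ2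
    have hWfin : {m : PartialIso X | ∃ k ≤ r, IsWord Φ m k}.Finite := finite_words hΦfin r
    set S : ℕ → Set X := fun n =>
      {x ∈ A n | ∃ m k, IsWord Φ m k ∧ k ≤ r ∧ x ∈ m.dom ∧ m.toFun x ∈ (A n)ᶜ} with hSdef
    have hSm : ∀ n, MeasurableSet (S n) := fun n =>
      distSet_measurable hΦfin r (hAm n) (hAm n).compl
    have hTt : ∀ m ∈ {m : PartialIso X | ∃ k ≤ r, IsWord Φ m k},
        Tendsto (fun n => μ (A n ∩ m.dom ∩ m.toFun ⁻¹' (A n)ᶜ)) atTop (nhds 0) := by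
      rintro m ⟨k, hk, hw⟩
      have hinner : m.IsInnerOf R := hw.inner hRequiv hΦ.1
      set T : ℕ → Set X := fun n => A n ∩ m.dom ∩ m.toFun ⁻¹' (A n)ᶜ with hT
      have hTm : ∀ n, MeasurableSet (T n) := fun n =>
        ((hAm n).inter m.measurableSet_dom).inter (m.measurable_toFun (hAm n).compl)
      have hTd : ∀ n, T n ⊆ m.dom := fun n x hx => hx.1.2
      have hU : ∀ n, m.toFun '' T n ⊆ m.toFun '' (A n ∩ m.dom) \ A n := by
        rintro n y ⟨x, ⟨⟨hxA, hxd⟩, hxB⟩, rfl⟩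
        exact ⟨⟨x, ⟨hxA, hxd⟩, rfl⟩, hxB⟩
      have hUt : Tendsto (fun n => μ (m.toFun '' T n)) atTop (nhds 0) :=
        tendsto_zero_of_le (fun n => measure_mono (hU n)) (hai m hinner)
      have hres := qi_image_tendsto hqi m.symm (hinner.symm'' hRequiv)
        (fun n => m.measurableSet_image (hTm n) (hTd n))
        (fun n => m.image_subset_ran (hTd n)) hUt
      have heq : ∀ n, m.symm.toFun '' (m.toFun '' T n) = T n := fun n =>
        m.invFun_image_image (hTd n)
      simpa only [heq] using hres
    have hSt : Tendsto (fun n => μ (S n)) atTop (nhds 0) := by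
      have hsum : Tendsto (fun n => ∑ m ∈ hWfin.toFinset,
          μ (A n ∩ m.dom ∩ m.toFun ⁻¹' (A n)ᶜ)) atTop (nhds 0) := by
        have h := tendsto_finset_sum hWfin.toFinset
          (fun m hm => hTt m (hWfin.mem_toFinset.1 hm))
        simpa using h
      refine tendsto_zero_of_le (fun n => ?_) hsum
      simp only [hSdef]
      rw [distSet_eq Φ r (A n) (A n)ᶜ]
      have hcoe : (⋃ m ∈ {m : PartialIso X | ∃ k ≤ r, IsWord Φ m k},
          A n ∩ m.dom ∩ m.toFun ⁻¹' (A n)ᶜ)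
          = ⋃ m ∈ hWfin.toFinset, A n ∩ m.dom ∩ m.toFun ⁻¹' (A n)ᶜ := by
        ext x
        simp [hWfin.mem_toFinset]
      rw [hcoe]
      exact measure_biUnion_finset_le _ _
    have hAc : ∀ n, δ ≤ μ (A n)ᶜ := by
      intro n
      rw [prob_compl_eq_one_sub (hAm n)]
      calc δ = 1 - (1 - δ) := (ENNReal.sub_sub_cancel ENNReal.one_ne_top hδ1).symm
      _ ≤ 1 - μ (A n) := tsub_le_tsub_left (hbound n).2 1
    obtain ⟨n, hn⟩ := (ENNReal.tendsto_nhds_zero.1 hSt (δ / 2) hδ2).exists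
    have hA' : δ / 2 ≤ μ (A n \ S n) := by
      have h1 : μ (A n) ≤ μ (A n \ S n) + μ (S n) := by
        refine le_trans (measure_mono ?_) (measure_union_le _ _)
        intro x hx
        by_cases h : x ∈ S n
        exacts [Or.inr h, Or.inl ⟨hx, h⟩]
      have h2 : δ ≤ μ (A n \ S n) + δ / 2 :=
        le_trans (hbound n).1 (le_trans h1 (add_le_add_right hn _))
      calc δ / 2 = δ - δ / 2 := (ENNReal.sub_half hδtop).symm
      _ ≤ μ (A n \ S n) := tsub_le_iff_right.2 h2
    have hwd := hr (A n \ S n) (A n)ᶜ ((hAm n).diff (hSm n)) (hAm n).compl hA'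
      (le_trans ENNReal.half_le_self (hAc n))
    have hempty : {x ∈ A n \ S n |
        ∃ m k, IsWord Φ m k ∧ k ≤ r ∧ x ∈ m.dom ∧ m.toFun x ∈ (A n)ᶜ} = ∅ := by
      ext x
      simp only [Set.mem_setOf_eq, Set.mem_empty_iff_false, iff_false, not_and]
      rintro ⟨hxA, hxS⟩ ⟨m, k, hw, hk, hdom, hB⟩
      exact hxS (by rw [hSdef]; exact ⟨hxA, m, k, hw, hk, hdom, hB⟩)
    unfold wordDistLE at hwd
    rw [hempty] at hwd
    simp at hwd
  · -- StronglyErgodic → Concentrated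
    intro hse
    by_contra hnc
    apply hse
    unfold Concentrated wordDistLE at hnc
    push_neg at hnc
    obtain ⟨δ0, hδ0, hbad⟩ := hnc
    choose A B hAmeas hBmeas hAμ hBμ hfar using hbad
    -- neighborhoods of A (n+1)
    set N : ℕ → ℕ → Set X := fun n k =>
      ⋃ m ∈ {m : PartialIso X | ∃ j ≤ k, IsWord Φ m j}, m.dom ∩ m.toFun ⁻¹' (A (n + 1))
      with hNdef
    have hNmeas : ∀ n k, MeasurableSet (N n k) := fun n k =>
      (finite_words hΦfin k).measurableSet_biUnion fun m _ =>
        m.measurableSet_dom.inter (m.measurable_toFun (hAmeas (n + 1)))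
    have hNle : ∀ n k k', k ≤ k' → N n k ⊆ N n k' := by
      intro n k k' hkk x hx
      rw [hNdef] at hx ⊢
      rw [Set.mem_iUnion₂] at hx ⊢
      obtain ⟨m, ⟨j, hj, hw⟩, hxm⟩ := hx
      exact ⟨m, ⟨j, hj.trans hkk, hw⟩, hxm⟩
    have hAN : ∀ n k, A (n + 1) ⊆ N n k := by
      intro n k x hx
      rw [hNdef]
      rw [Set.mem_iUnion₂]
      exact ⟨PartialIso.refl X, ⟨0, Nat.zero_le k, isWord_refl Φ⟩, Set.mem_univ x, hx⟩
    -- pigeonhole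
    have hpigeon : ∀ n : ℕ, ∃ k ≤ n, μ (N n (k + 1) \ N n k) ≤ 2 * ((n : ℝ≥0∞) + 1)⁻¹ := by
      intro n
      by_contra hcon
      push_neg at hcon
      have hc0 : ((n : ℝ≥0∞) + 1) ≠ 0 := by simp
      have hctop : ((n : ℝ≥0∞) + 1) ≠ ∞ :=
        ENNReal.add_ne_top.2 ⟨ENNReal.natCast_ne_top n, ENNReal.one_ne_top⟩
      have hpd : (↑(Finset.range (n + 1)) : Set ℕ).PairwiseDisjoint
          (fun k => N n (k + 1) \ N n k) := by
        have hgen : ∀ i j, i < j →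
            Disjoint (N n (i + 1) \ N n i) (N n (j + 1) \ N n j) := by
          intro i j hij
          refine Set.disjoint_left.2 ?_
          rintro x ⟨hx1, -⟩ ⟨-, hx2⟩
          exact hx2 (hNle n (i + 1) j hij hx1)
        refine fun i _ j _ hij => ?_
        rcases hij.lt_or_gt with h | h
        exacts [hgen i j h, (hgen j i h).symm]
      have hsum1 : ∑ kk ∈ Finset.range (n + 1), μ (N n (kk + 1) \ N n kk) ≤ 1 := by
        rw [← measure_biUnion_finset hpd
          (fun kk _ => (hNmeas n (kk + 1)).diff (hNmeas n kk))]
        exact prob_le_one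
      have hsum2 : (2 : ℝ≥0∞) ≤ ∑ kk ∈ Finset.range (n + 1), μ (N n (kk + 1) \ N n kk) := by
        have hconst : ∑ kk ∈ Finset.range (n + 1), 2 * ((n : ℝ≥0∞) + 1)⁻¹ = 2 := by
          rw [Finset.sum_const, Finset.card_range, nsmul_eq_mul]
          push_cast
          rw [mul_left_comm, ENNReal.mul_inv_cancel hc0 hctop, mul_one]
        rw [← hconst]
        refine Finset.sum_le_sum fun kk hkk => ?_
        exact (hcon kk (Nat.lt_succ_iff.1 (Finset.mem_range.1 hkk))).le
      have h12 := hsum2.trans hsum1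
      exact absurd h12 (not_le.2 ENNReal.one_lt_two)
    choose k hkn hkbound using hpigeon
    set E : ℕ → Set X := fun n => N n (k n) with hEdef
    have hEmeas : ∀ n, MeasurableSet (E n) := fun n => hNmeas n (k n)
    have hElb : ∀ n, δ0 ≤ μ (E n) := fun n =>
      le_trans (hAμ (n + 1)) (measure_mono (hAN n (k n)))
    -- B (n+1) essentially misses E n
    have hBE : ∀ n, μ (B (n + 1) ∩ E n) = 0 := by
      intro n
      have hVnull : μ {x ∈ A (n + 1) | ∃ m j, IsWord Φ m j ∧ j ≤ n + 1 ∧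
          x ∈ m.dom ∧ m.toFun x ∈ B (n + 1)} = 0 :=
        le_antisymm (hfar (n + 1)) zero_le
      have hcov : B (n + 1) ∩ E n ⊆ ⋃ m ∈ {m : PartialIso X | ∃ j ≤ k n, IsWord Φ m j},
          B (n + 1) ∩ (m.dom ∩ m.toFun ⁻¹' A (n + 1)) := by
        rintro x ⟨hxB, hxE⟩
        rw [hEdef] at hxE
        simp only [hNdef, Set.mem_iUnion₂] at hxE
        obtain ⟨m, hm, hx⟩ := hxE
        rw [Set.mem_iUnion₂]
        exact ⟨m, hm, hxB, hx⟩
      refine measure_mono_null hcov ?_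
      rw [measure_biUnion_null_iff (finite_words hΦfin (k n)).countable]
      rintro m ⟨j, hj, hw⟩
      set P : Set X := B (n + 1) ∩ (m.dom ∩ m.toFun ⁻¹' A (n + 1)) with hP
      have hPd : P ⊆ m.dom := fun x hx => hx.2.1
      have hPm : MeasurableSet P := (hBmeas _).inter
        (m.measurableSet_dom.inter (m.measurable_toFun (hAmeas _)))
      have himg : m.toFun '' P ⊆ {x ∈ A (n + 1) | ∃ m' j', IsWord Φ m' j' ∧ j' ≤ n + 1 ∧
          x ∈ m'.dom ∧ m'.toFun x ∈ B (n + 1)} := by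
        rintro y ⟨x, ⟨hxB, hxd, hxA⟩, rfl⟩
        refine ⟨hxA, m.symm, j, hw.symm', hj.trans ((hkn n).trans (Nat.le_succ n)), m.mapsTo hxd, ?_⟩
        show m.invFun (m.toFun x) ∈ B (n + 1)
        rw [m.left_inv x hxd]
        exact hxB
      have himgnull : μ (m.toFun '' P) = 0 := measure_mono_null himg hVnull
      have hq := hqi m.symm ((hw.symm').inner hRequiv hΦ.1) (m.toFun '' P)
        (m.image_subset_ran hPd) (m.measurableSet_image hPm hPd) himgnull
      rwa [show m.symm.toFun '' (m.toFun '' P) = P from m.invFun_image_image hPd] at hq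
    have hEub : ∀ n, μ (E n) ≤ 1 - δ0 := by
      intro n
      have h1 : μ (E n) ≤ μ (B (n + 1))ᶜ := by
        calc μ (E n) ≤ μ (B (n + 1) ∩ E n) + μ (E n \ B (n + 1)) := by
              refine le_trans (measure_mono ?_) (measure_union_le _ _)
              intro x hx
              by_cases hB : x ∈ B (n + 1)
              exacts [Or.inl ⟨hB, hx⟩, Or.inr ⟨hx, hB⟩]
        _ = μ (E n \ B (n + 1)) := by rw [hBE n, zero_add]
        _ ≤ μ (B (n + 1))ᶜ := measure_mono fun x hx => hx.2
      rw [prob_compl_eq_one_sub (hBmeas (n + 1))] at h1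
      exact le_trans h1 (tsub_le_tsub_left (hBμ (n + 1)) 1)
    -- asymptotic invariance
    have hinv1 : Tendsto (fun n : ℕ => 2 * ((n : ℝ≥0∞) + 1)⁻¹) atTop (nhds 0) := by
      have h1 : Tendsto (fun n : ℕ => ((n : ℝ≥0∞) + 1)⁻¹) atTop (nhds 0) := by
        have h := ENNReal.tendsto_inv_nat_nhds_zero.comp (tendsto_add_atTop_nat 1)
        refine h.congr fun n => ?_
        simp only [Function.comp_apply]
        push_cast
        rfl
      have h2 := ENNReal.Tendsto.const_mul h1 (Or.inr (ENNReal.ofNat_ne_top (n := 2)))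
      simpa using h2
    have hstepA : ∀ a : PartialIso X, (a ∈ Φ ∨ ∃ ψ ∈ Φ, a = ψ.symm) →
        ∀ n, μ (a.toFun '' (E n ∩ a.dom) \ E n) ≤ 2 * ((n : ℝ≥0∞) + 1)⁻¹ := by
      intro a ha n
      have haw : IsWord Φ a.symm 1 := by
        rcases ha with h | ⟨ψ, hψ, rfl⟩
        · exact isWord_symm_of_mem h
        · rw [PartialIso.symm_symm]
          exact isWord_of_mem hψ
      have hsub : a.toFun '' (N n (k n) ∩ a.dom) ⊆ N n (k n + 1) := by
        rintro y ⟨x, ⟨hxN, hxd⟩, rfl⟩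
        rw [hNdef] at hxN
        rw [Set.mem_iUnion₂] at hxN
        obtain ⟨m, ⟨j, hj, hw⟩, hxm, hxA⟩ := hxN
        rw [hNdef]
        rw [Set.mem_iUnion₂]
        refine ⟨a.symm.trans m, ⟨1 + j, by omega, haw.trans' hw⟩, ?_, ?_⟩
        · refine ⟨a.mapsTo hxd, ?_⟩
          show a.invFun (a.toFun x) ∈ m.dom
          rw [a.left_inv x hxd]
          exact hxm
        · show m.toFun (a.invFun (a.toFun x)) ∈ A (n + 1)
          rw [a.left_inv x hxd]
          exact hxA
      calc μ (a.toFun '' (E n ∩ a.dom) \ E n) ≤ μ (N n (k n + 1) \ N n (k n)) :=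
            measure_mono fun y hy => ⟨hsub hy.1, hy.2⟩
      _ ≤ _ := hkbound n
    have hstepB : ∀ l : List (PartialIso X), (∀ a ∈ l, a ∈ Φ ∨ ∃ ψ ∈ Φ, a = ψ.symm) →
        Tendsto (fun n => μ ((l.foldl PartialIso.trans (PartialIso.refl X)).toFun ''
          (E n ∩ (l.foldl PartialIso.trans (PartialIso.refl X)).dom) \ E n))
          atTop (nhds 0) := by
      intro l
      induction l with
      | nil =>
        intro _
        have hempty : ∀ n, (PartialIso.refl X).toFun ''
            (E n ∩ (PartialIso.refl X).dom) \ E n = ∅ := by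
          intro n
          simp [PartialIso.refl]
        simp only [List.foldl_nil, hempty, measure_empty]
        exact tendsto_const_nhds
      | cons a l ih =>
        intro hmem
        have hmeml : ∀ φ ∈ l, φ ∈ Φ ∨ ∃ ψ ∈ Φ, φ = ψ.symm :=
          fun φ hφ => hmem φ (List.mem_cons_of_mem a hφ)
        have ha := hmem a (List.mem_cons_self)
        set w : PartialIso X := l.foldl PartialIso.trans (PartialIso.refl X) with hwdef
        have hwword : IsWord Φ w l.length := ⟨l, rfl, hmeml, rfl⟩
        have hwinner : w.IsInnerOf R := hwword.inner hRequiv hΦ.1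
        have hfold : (a :: l).foldl PartialIso.trans (PartialIso.refl X) = a.trans w := by
          rw [List.foldl_cons, PartialIso.refl_trans, PartialIso.foldl_trans]
        simp only [hfold]
        set S2 : ℕ → Set X := fun n => (a.toFun '' (E n ∩ a.dom) \ E n) ∩ w.dom with hS2
        have hS2meas : ∀ n, MeasurableSet (S2 n) := fun n =>
          ((a.measurableSet_image ((hEmeas n).inter a.measurableSet_dom)
            Set.inter_subset_right).diff (hEmeas n)).inter w.measurableSet_dom
        have hS2sub : ∀ n, S2 n ⊆ w.dom := fun n => Set.inter_subset_right
        have hS2tend : Tendsto (fun n => μ (S2 n)) atTop (nhds 0) :=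
          tendsto_zero_of_le
            (fun n => le_trans (measure_mono Set.inter_subset_left) (hstepA a ha n)) hinv1
        have himg2 := qi_image_tendsto hqi w hwinner hS2meas hS2sub hS2tend
        have hbound2 : ∀ n, μ ((a.trans w).toFun '' (E n ∩ (a.trans w).dom) \ E n)
            ≤ μ (w.toFun '' (E n ∩ w.dom) \ E n) + μ (w.toFun '' S2 n) := by
          intro n
          refine le_trans (measure_mono ?_) (measure_union_le _ _)
          rintro y ⟨⟨x, ⟨hxE, hxad, hxwd⟩, rfl⟩, hyE⟩
          by_cases hcase : a.toFun x ∈ E n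
          · exact Or.inl ⟨⟨a.toFun x, ⟨hcase, hxwd⟩, rfl⟩, hyE⟩
          · exact Or.inr ⟨a.toFun x, ⟨⟨⟨x, ⟨hxE, hxad⟩, rfl⟩, hcase⟩, hxwd⟩, rfl⟩
        refine tendsto_zero_of_le hbound2 ?_
        have hsum2 := (ih hmeml).add himg2
        simpa using hsum2
    have hasymp : AsympInvariantRel μ R E := by
      intro f hf
      obtain ⟨g, hg⟩ : ∃ g : ℕ → PartialIso X,
          {m : PartialIso X | ∃ j, IsWord Φ m j} = Set.range g :=
        (countable_words hΦfin).exists_eq_range ⟨PartialIso.refl X, 0, isWord_refl Φ⟩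
      have hgw : ∀ i, ∃ j, IsWord Φ (g i) j := by
        intro i
        have hmem : g i ∈ Set.range g := Set.mem_range_self i
        rw [← hg] at hmem
        exact hmem
      letI := upgradeStandardBorel X
      have heqm : ∀ i, MeasurableSet {x | f.toFun x = (g i).toFun x} := fun i =>
        f.measurable_toFun.stronglyMeasurable.measurableSet_eq_fun
          (g i).measurable_toFun.stronglyMeasurable
      set G : ℕ → Set X := fun i =>
        (f.dom ∩ (g i).dom) ∩ {x | f.toFun x = (g i).toFun x} with hGdef
      have hGmeas : ∀ i, MeasurableSet (G i) := fun i =>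
        (f.measurableSet_dom.inter (g i).measurableSet_dom).inter (heqm i)
      set D : ℕ → Set X := disjointed G with hDdef
      have hDmeas : ∀ i, MeasurableSet (D i) := MeasurableSet.disjointed hGmeas
      have hDG : ∀ i, D i ⊆ G i := disjointed_subset G
      have hDdisj : Pairwise (Function.onFun Disjoint D) := disjoint_disjointed G
      set Z : Set X := f.dom \ ⋃ i, G i with hZdef
      have hZmeas : MeasurableSet Z := f.measurableSet_dom.diff (MeasurableSet.iUnion hGmeas)
      have hZnull : μ Z = 0 := by
        have hae := hΦ.2
        rw [MeasureTheory.ae_iff] at hae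
        refine measure_mono_null ?_ hae
        rintro x ⟨hxd, hxG⟩
        simp only [Set.mem_setOf_eq]
        intro hx
        obtain ⟨m, j, hw, hdom, heq⟩ := hx (f.toFun x) (hf x hxd)
        have hmr : m ∈ Set.range g := by
          rw [← hg]
          exact ⟨j, hw⟩
        obtain ⟨i, rfl⟩ := hmr
        exact hxG (Set.mem_iUnion.2 ⟨i, ⟨hxd, hdom⟩, heq.symm⟩)
      have hZimg : μ (f.toFun '' Z) = 0 := hqi f hf Z Set.diff_subset hZmeas hZnull
      have hDsum : ∑' i, μ (D i) ≠ ∞ := by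
        rw [← measure_iUnion hDdisj hDmeas]
        exact measure_ne_top μ _
      rw [ENNReal.tendsto_nhds_zero]
      intro ε hε
      have hε2 : (0 : ℝ≥0∞) < ε / 2 := ENNReal.div_pos hε.ne' (by norm_num)
      obtain ⟨δ1, hδ1, hδfun⟩ := qi_image_small hqi f hf hε2
      have htail : Tendsto (fun I => ∑' i, μ (D (i + I))) atTop (nhds 0) :=
        ENNReal.tendsto_sum_nat_add _ hDsum
      obtain ⟨I, hI⟩ := (ENNReal.tendsto_nhds_zero.1 htail δ1 hδ1).exists
      set T : Set X := ⋃ i, D (i + I) with hTdef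
      have hTmeas : MeasurableSet T := MeasurableSet.iUnion fun i => hDmeas _
      have hTsub : T ⊆ f.dom :=
        Set.iUnion_subset fun i => (hDG _).trans fun x hx => hx.1.1
      have hTμ : μ T ≤ δ1 := le_trans (measure_iUnion_le _) hI
      have hTimg : μ (f.toFun '' T) ≤ ε / 2 := hδfun T hTmeas hTsub hTμ
      have hfinpart : Tendsto (fun n => ∑ i ∈ Finset.range I,
          μ ((g i).toFun '' (E n ∩ (g i).dom) \ E n)) atTop (nhds 0) := by
        have hterms : ∀ i ∈ Finset.range I,
            Tendsto (fun n => μ ((g i).toFun '' (E n ∩ (g i).dom) \ E n)) atTop (nhds 0) := by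
          intro i _
          obtain ⟨j, hword⟩ := hgw i
          obtain ⟨l, hl, hmem, hfold⟩ := hword
          rw [hfold]
          exact hstepB l hmem
        simpa using tendsto_finset_sum (Finset.range I) hterms
      have hcover : ∀ n, μ (f.toFun '' (E n ∩ f.dom) \ E n) ≤
          (∑ i ∈ Finset.range I, μ ((g i).toFun '' (E n ∩ (g i).dom) \ E n))
            + (μ (f.toFun '' T) + μ (f.toFun '' Z)) := by
        intro n
        have hsplit : f.toFun '' (E n ∩ f.dom) \ E n ⊆
            (⋃ i ∈ Finset.range I, ((g i).toFun '' (E n ∩ (g i).dom) \ E n))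
              ∪ (f.toFun '' T ∪ f.toFun '' Z) := by
          rintro y ⟨⟨x, ⟨hxE, hxd⟩, rfl⟩, hyE⟩
          by_cases hxGU : x ∈ ⋃ i, G i
          · have hxDU : x ∈ ⋃ i, D i := by
              rw [hDdef, iUnion_disjointed]
              exact hxGU
            obtain ⟨i, hxDi⟩ := Set.mem_iUnion.1 hxDU
            by_cases hiI : i < I
            · refine Or.inl (Set.mem_biUnion (Finset.mem_range.2 hiI) ?_)
              have hxGi := hDG i hxDi
              exact ⟨⟨x, ⟨hxE, hxGi.1.2⟩, hxGi.2.symm⟩, hyE⟩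
            · refine Or.inr (Or.inl ⟨x, ?_, rfl⟩)
              rw [hTdef]
              refine Set.mem_iUnion.2 ⟨i - I, ?_⟩
              rwa [Nat.sub_add_cancel (le_of_not_gt hiI)]
          · exact Or.inr (Or.inr ⟨x, ⟨hxd, hxGU⟩, rfl⟩)
        refine le_trans (measure_mono hsplit) ?_
        refine le_trans (measure_union_le _ _) (add_le_add ?_ (measure_union_le _ _))
        exact measure_biUnion_finset_le _ _
      have hconst : μ (f.toFun '' T) + μ (f.toFun '' Z) ≤ ε / 2 := by
        rw [hZimg, add_zero]
        exact hTimg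
      filter_upwards [ENNReal.tendsto_nhds_zero.1 hfinpart (ε / 2) hε2] with n hn
      calc μ (f.toFun '' (E n ∩ f.dom) \ E n) ≤ _ := hcover n
      _ ≤ ε / 2 + ε / 2 := add_le_add hn hconst
      _ = ε := ENNReal.add_halves ε
    exact ⟨E, hEmeas, hasymp, δ0, hδ0, fun n => ⟨hElb n, hEub n⟩⟩
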